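/- Let F, G, F' be subspaces of a finite-dimensional real inner product space E such that F and G are perpendicular, meaning the orthogonal complements of F ∩ G within F and within G are orthogonal to each other. If dim(F' ∩ G) = dim(F ∩ G), then the Hausdorff angle distance between F ∩ G and F' ∩ G is at most the Hausdorff angle distance between F and F'. -/

import Mathlib

/-- The projective angle metric between (the lines spanned by) two vectors. -/
noncomputable def projAngle {E : Type*} [NormedAddCommGroup E] [InnerProductSpace ℝ E]
    (x y : E) : ℝ := Real.arccos (|(inner ℝ x y : ℝ)| / (‖x‖ * ‖y‖))

/-- The Hausdorff distance between `P(A)` and `P(B)` in the projective angle metric. -/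
noncomputable def hausAngle {E : Type*} [NormedAddCommGroup E] [InnerProductSpace ℝ E]
    (A B : Submodule ℝ E) : ℝ :=
  max (⨆ x : {x : E // x ∈ A ∧ x ≠ 0}, ⨅ y : {y : E // y ∈ B ∧ y ≠ 0},
        projAngle (x : E) (y : E))
      (⨆ y : {y : E // y ∈ B ∧ y ≠ 0}, ⨅ x : {x : E // x ∈ A ∧ x ≠ 0},
        projAngle (y : E) (x : E))

open Real

section AuxLemmas
variable {E : Type*} [NormedAddCommGroup E] [InnerProductSpace ℝ E]

lemma arccos_anti' : Antitone Real.arccos := fun _ _ h =>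
  sub_le_sub_left (Real.monotone_arcsin h) _

lemma projAngle_nonneg (x y : E) : 0 ≤ projAngle x y := Real.arccos_nonneg _

lemma projAngle_le_pi_div_two (x y : E) : projAngle x y ≤ π / 2 := by
  unfold projAngle
  rw [Real.arccos, sub_le_self_iff]
  exact Real.arcsin_nonneg.2 (div_nonneg (abs_nonneg _) (by positivity))

lemma cos_projAngle (x y : E) (hx : x ≠ 0) (hy : y ≠ 0) :
    Real.cos (projAngle x y) * (‖x‖ * ‖y‖) = |(inner ℝ x y : ℝ)| := by
  have hpos : 0 < ‖x‖ * ‖y‖ := mul_pos (norm_pos_iff.2 hx) (norm_pos_iff.2 hy)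
  have h1 : |(inner ℝ x y : ℝ)| / (‖x‖ * ‖y‖) ≤ 1 :=
    (div_le_one hpos).2 (abs_real_inner_le_norm x y)
  have h0 : 0 ≤ |(inner ℝ x y : ℝ)| / (‖x‖ * ‖y‖) := div_nonneg (abs_nonneg _) hpos.le
  rw [projAngle, Real.cos_arccos (by linarith) h1, div_mul_cancel₀ _ hpos.ne']

lemma projAngle_le_of (x y : E) {θ : ℝ} (h0 : 0 ≤ θ) (hπ : θ ≤ π)
    (hpos : 0 < ‖x‖ * ‖y‖)
    (h : Real.cos θ * (‖x‖ * ‖y‖) ≤ |(inner ℝ x y : ℝ)|) : projAngle x y ≤ θ := by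
  have h2 : Real.cos θ ≤ |(inner ℝ x y : ℝ)| / (‖x‖ * ‖y‖) := (le_div_iff₀ hpos).2 h
  calc projAngle x y ≤ Real.arccos (Real.cos θ) := arccos_anti' h2
    _ = θ := Real.arccos_cos h0 hπ

end AuxLemmas

set_option maxHeartbeats 1600000

/-- If `F` and `G` are perpendicular (the orthogonal complements of `F ∩ G` within `F` and
within `G` are orthogonal to each other) and `dim (F' ∩ G) = dim (F ∩ G)`, then
`α^Haus(F ∩ G, F' ∩ G) ≤ α^Haus(F, F')`. -/
theorem hausAngle_inter_le {E : Type*} [NormedAddCommGroup E] [InnerProductSpace ℝ E]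
    [FiniteDimensional ℝ E] (F G F' : Submodule ℝ E)
    (hperp : ∀ x ∈ F, ∀ y ∈ G, (∀ z ∈ F ⊓ G, (inner ℝ x z : ℝ) = 0) →
      (∀ z ∈ F ⊓ G, (inner ℝ y z : ℝ) = 0) → (inner ℝ x y : ℝ) = 0)
    (hdim : Module.finrank ℝ ↥(F' ⊓ G) = Module.finrank ℝ ↥(F ⊓ G)) :
    hausAngle (F ⊓ G) (F' ⊓ G) ≤ hausAngle F F' := by
  classical
  set δ := hausAngle F F' with hδdef
  have hδ0 : 0 ≤ δ :=
    le_trans (Real.iSup_nonneg fun _ => Real.iInf_nonneg fun _ => projAngle_nonneg _ _)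
      (le_max_left _ _)
  -- trivial case : F ⊓ G = ⊥
  by_cases hKbot : F ⊓ G = ⊥
  · have hK'bot : F' ⊓ G = ⊥ := Submodule.finrank_eq_zero.1 (by
      rw [hdim, hKbot, finrank_bot])
    have h1 : IsEmpty {x : E // x ∈ F ⊓ G ∧ x ≠ 0} :=
      ⟨fun ⟨x, hx, h0⟩ => h0 (by simpa [hKbot] using hx)⟩
    have h2 : IsEmpty {x : E // x ∈ F' ⊓ G ∧ x ≠ 0} :=
      ⟨fun ⟨x, hx, h0⟩ => h0 (by simpa [hK'bot] using hx)⟩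
    rw [hausAngle, Real.iSup_of_isEmpty, Real.iSup_of_isEmpty]
    simpa using hδ0
  -- nontrivial case
  obtain ⟨x₀, hx₀K, hx₀0⟩ := Submodule.exists_mem_ne_zero_of_ne_bot hKbot
  have hK'bot : F' ⊓ G ≠ ⊥ := by
    intro h
    exact hKbot (Submodule.finrank_eq_zero.1 (by rw [← hdim, h, finrank_bot]))
  obtain ⟨y₀, hy₀K, hy₀0⟩ := Submodule.exists_mem_ne_zero_of_ne_bot hK'bot
  haveI nF : Nonempty {x : E // x ∈ F ∧ x ≠ 0} :=
    ⟨⟨x₀, (inf_le_left : F ⊓ G ≤ F) hx₀K, hx₀0⟩⟩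
  haveI nK : Nonempty {x : E // x ∈ F ⊓ G ∧ x ≠ 0} := ⟨⟨x₀, hx₀K, hx₀0⟩⟩
  haveI nK' : Nonempty {y : E // y ∈ F' ⊓ G ∧ y ≠ 0} := ⟨⟨y₀, hy₀K, hy₀0⟩⟩
  -- bddBelow for inf families
  have hbbK : ∀ y : E, BddBelow (Set.range fun x : {x : E // x ∈ F ⊓ G ∧ x ≠ 0} =>
      projAngle y (x : E)) := fun y => ⟨0, by rintro _ ⟨i, rfl⟩; exact projAngle_nonneg _ _⟩
  have hbbK' : ∀ x : E, BddBelow (Set.range fun y : {y : E // y ∈ F' ⊓ G ∧ y ≠ 0} =>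
      projAngle x (y : E)) := fun x => ⟨0, by rintro _ ⟨i, rfl⟩; exact projAngle_nonneg _ _⟩
  have hbbF : ∀ y : E, BddBelow (Set.range fun x : {x : E // x ∈ F ∧ x ≠ 0} =>
      projAngle y (x : E)) := fun y => ⟨0, by rintro _ ⟨i, rfl⟩; exact projAngle_nonneg _ _⟩
  -- step (b): pointwise bound for elements of F' ⊓ G
  have hB : ∀ y : E, y ∈ F' ⊓ G → y ≠ 0 →
      (⨅ x : {x : E // x ∈ F ⊓ G ∧ x ≠ 0}, projAngle y (x : E)) ≤ δ := by
    intro y hyK' hy0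
    have hyF' : y ∈ F' := hyK'.1
    have hyG : y ∈ G := hyK'.2
    -- the inf over F is at most δ
    have hbA : BddAbove (Set.range fun y : {y : E // y ∈ F' ∧ y ≠ 0} =>
        ⨅ x : {x : E // x ∈ F ∧ x ≠ 0}, projAngle (y : E) (x : E)) := by
      refine ⟨π / 2, ?_⟩
      rintro _ ⟨i, rfl⟩
      exact le_trans (ciInf_le (hbbF _) ⟨x₀, (inf_le_left : F ⊓ G ≤ F) hx₀K, hx₀0⟩)
        (projAngle_le_pi_div_two _ _)
    have h1 : (⨅ x : {x : E // x ∈ F ∧ x ≠ 0}, projAngle y (x : E)) ≤ δ :=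
      le_trans (le_ciSup hbA ⟨y, hyF', hy0⟩) (le_max_right _ _)
    refine le_trans (le_ciInf ?_) h1
    rintro ⟨x, hxF, hx0⟩
    -- show: inf over F ⊓ G ≤ projAngle y x
    set xK : E := (Submodule.orthogonalProjectionOnto (F ⊓ G) x : E) with hxKdef
    have hxKmem : xK ∈ F ⊓ G := Submodule.coe_mem _
    set yK : E := (Submodule.orthogonalProjectionOnto (F ⊓ G) y : E) with hyKdef
    have hyKmem : yK ∈ F ⊓ G := Submodule.coe_mem _
    -- perpendicularity : ⟪x - xK, y⟫ = 0
    have h1o : ∀ z ∈ F ⊓ G, (inner ℝ (x - xK) z : ℝ) = 0 :=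
      Submodule.starProjection_inner_eq_zero (K := F ⊓ G) x
    have h2o : ∀ z ∈ F ⊓ G, (inner ℝ (y - yK) z : ℝ) = 0 :=
      Submodule.starProjection_inner_eq_zero (K := F ⊓ G) y
    have hp : (inner ℝ (x - xK) (y - yK) : ℝ) = 0 :=
      hperp (x - xK) (sub_mem hxF ((inf_le_left : F ⊓ G ≤ F) hxKmem))
        (y - yK) (sub_mem hyG ((inf_le_right : F ⊓ G ≤ G) hyKmem)) h1o h2o
    have hkey : (inner ℝ (x - xK) y : ℝ) = 0 := by
      have h3 : (inner ℝ (x - xK) yK : ℝ) = 0 := h1o yK hyKmem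
      have : (inner ℝ (x - xK) y : ℝ) = inner ℝ (x - xK) (y - yK) + inner ℝ (x - xK) yK := by
        rw [← inner_add_right]; congr 1; abel
      rw [this, hp, h3, add_zero]
    have hinner : (inner ℝ y x : ℝ) = inner ℝ y xK := by
      have hk := hkey
      rw [inner_sub_left] at hk
      have e1 : (inner ℝ y x : ℝ) = inner ℝ x y := real_inner_comm _ _
      have e2 : (inner ℝ y xK : ℝ) = inner ℝ xK y := real_inner_comm _ _
      linarith
    -- norm comparison
    have hxKle : ‖xK‖ ≤ ‖x‖ := by
      have h4 : (inner ℝ (x - xK) xK : ℝ) = 0 := h1o xK hxKmem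
      have h5 := norm_add_sq_real (x - xK) xK
      rw [h4] at h5
      simp only [sub_add_cancel] at h5
      have hsq : ‖xK‖ ^ 2 ≤ ‖x‖ ^ 2 := by nlinarith [sq_nonneg ‖x - xK‖]
      nlinarith [norm_nonneg x, norm_nonneg xK]
    by_cases hxK0 : xK = 0
    · -- inner y x = 0, so projAngle y x = π/2
      have hz : (inner ℝ y x : ℝ) = 0 := by rw [hinner, hxK0, inner_zero_right]
      have : projAngle y x = π / 2 := by
        rw [projAngle, hz, abs_zero, zero_div, Real.arccos_zero]
      rw [this]
      exact le_trans (ciInf_le (hbbK _) ⟨x₀, hx₀K, hx₀0⟩) (projAngle_le_pi_div_two _ _)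
    · have hstep : projAngle y xK ≤ projAngle y x := by
        refine projAngle_le_of y xK (projAngle_nonneg _ _) (Real.arccos_le_pi _)
          (mul_pos (norm_pos_iff.2 hy0) (norm_pos_iff.2 hxK0)) ?_
        have hcos0 : 0 ≤ Real.cos (projAngle y x) :=
          Real.cos_nonneg_of_mem_Icc ⟨by linarith [projAngle_nonneg y x, Real.pi_pos],
            projAngle_le_pi_div_two y x⟩
        have heq := cos_projAngle y x hy0 hx0
        rw [← hinner]
        calc Real.cos (projAngle y x) * (‖y‖ * ‖xK‖)
            ≤ Real.cos (projAngle y x) * (‖y‖ * ‖x‖) := by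
              apply mul_le_mul_of_nonneg_left _ hcos0
              exact mul_le_mul_of_nonneg_left hxKle (norm_nonneg y)
          _ = |(inner ℝ y x : ℝ)| := heq
      exact le_trans (ciInf_le (hbbK _) ⟨xK, hxKmem, hxK0⟩) hstep
  -- case split on δ < π/2
  by_cases hδπ : δ < π / 2
  · -- cos δ > 0
    have hcosδ : 0 < Real.cos δ :=
      Real.cos_pos_of_mem_Ioo ⟨by linarith [Real.pi_pos], hδπ⟩
    -- pointwise norm bound on the projection
    have hPnorm : ∀ y : E, y ∈ F' ⊓ G →
        Real.cos δ * ‖y‖ ≤ ‖(Submodule.orthogonalProjectionOnto (F ⊓ G) y : E)‖ := by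
      intro y hy
      rcases eq_or_ne y 0 with rfl | hy0
      · simp
      by_contra hcon
      push_neg at hcon
      set Py : E := (Submodule.orthogonalProjectionOnto (F ⊓ G) y : E) with hPydef
      have hyn : (0 : ℝ) < ‖y‖ := norm_pos_iff.2 hy0
      set c₀ : ℝ := ‖Py‖ / ‖y‖ with hc₀def
      have hc₀lt : c₀ < Real.cos δ := (div_lt_iff₀ hyn).2 (by linarith)
      have hc₀0 : 0 ≤ c₀ := div_nonneg (norm_nonneg _) hyn.le
      have hPyle : ‖Py‖ ≤ ‖y‖ := by
        have := (Submodule.orthogonalProjectionOnto (F ⊓ G)).le_opNorm y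
        have h2 := Submodule.orthogonalProjectionOnto_norm_le (F ⊓ G)
        have h3 : ‖Submodule.orthogonalProjectionOnto (F ⊓ G) y‖ = ‖Py‖ := rfl
        nlinarith [norm_nonneg y]
      have hc₀1 : c₀ ≤ 1 := (div_le_one hyn).2 hPyle
      have hδlt : δ < Real.arccos c₀ := by
        have := Real.strictAntiOn_arccos (Set.mem_Icc.2 ⟨by linarith, hc₀1⟩)
          (Set.mem_Icc.2 ⟨Real.neg_one_le_cos δ, Real.cos_le_one δ⟩) hc₀lt
        rwa [Real.arccos_cos hδ0 (by linarith [Real.pi_pos])] at this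
      have hge : Real.arccos c₀ ≤ ⨅ x : {x : E // x ∈ F ⊓ G ∧ x ≠ 0}, projAngle y (x : E) := by
        refine le_ciInf ?_
        rintro ⟨x, hxK, hx0⟩
        have hxn : (0 : ℝ) < ‖x‖ := norm_pos_iff.2 hx0
        have hinner : (inner ℝ y x : ℝ) = inner ℝ Py x := by
          have : (inner ℝ (y - Py) x : ℝ) = 0 := Submodule.starProjection_inner_eq_zero (K := F ⊓ G) y x hxK
          rw [inner_sub_left] at this
          linarith
        have hub : |(inner ℝ y x : ℝ)| ≤ ‖Py‖ * ‖x‖ := by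
          rw [hinner]; exact abs_real_inner_le_norm Py x
        have hc : |(inner ℝ y x : ℝ)| / (‖y‖ * ‖x‖) ≤ c₀ := by
          rw [hc₀def, div_le_div_iff₀ (by positivity) hyn]
          calc |(inner ℝ y x : ℝ)| * ‖y‖ ≤ ‖Py‖ * ‖x‖ * ‖y‖ :=
                mul_le_mul_of_nonneg_right hub (norm_nonneg y)
            _ = ‖Py‖ * (‖y‖ * ‖x‖) := by ring
        exact arccos_anti' hc
      have := hB y hy hy0
      linarith
    -- the projection restricted to F' ⊓ G, as a linear map to F ⊓ G
    set L : ↥(F' ⊓ G) →ₗ[ℝ] ↥(F ⊓ G) :=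
      (Submodule.orthogonalProjectionOnto (F ⊓ G)).toLinearMap ∘ₗ (F' ⊓ G).subtype with hLdef
    have hLapp : ∀ v : ↥(F' ⊓ G), (L v : E) = (Submodule.orthogonalProjectionOnto (F ⊓ G) (v : E) : E) :=
      fun v => rfl
    have hLinj : Function.Injective L := by
      refine (injective_iff_map_eq_zero L).2 ?_
      intro v hv
      have hb := hPnorm (v : E) v.2
      have hz : ‖(Submodule.orthogonalProjectionOnto (F ⊓ G) (v : E) : E)‖ = 0 := by
        rw [← hLapp, hv]; simp
      rw [hz] at hb
      have : ‖(v : E)‖ = 0 := le_antisymm (by nlinarith [norm_nonneg (v : E)]) (norm_nonneg _)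
      exact Subtype.ext (norm_eq_zero.1 this)
    have hLsurj : Function.Surjective L :=
      (LinearMap.injective_iff_surjective_of_finrank_eq_finrank hdim).1 hLinj
    refine max_le ?_ ?_
    · -- first component
      refine Real.iSup_le ?_ hδ0
      rintro ⟨x, hxK, hx0⟩
      obtain ⟨y', hy'⟩ := hLsurj ⟨x, hxK⟩
      have hyK' : (y' : E) ∈ F' ⊓ G := y'.2
      have hPy : (Submodule.orthogonalProjectionOnto (F ⊓ G) (y' : E) : E) = x := by
        rw [← hLapp, hy']
      have hy0 : (y' : E) ≠ 0 := by
        intro h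
        apply hx0
        rw [← hPy, h]
        simp
      have hxn : (0 : ℝ) < ‖x‖ := norm_pos_iff.2 hx0
      have hyn : (0 : ℝ) < ‖(y' : E)‖ := norm_pos_iff.2 hy0
      have hinner : (inner ℝ x (y' : E) : ℝ) = ‖x‖ ^ 2 := by
        have h1 : (inner ℝ ((y' : E) - (Submodule.orthogonalProjectionOnto (F ⊓ G) (y' : E) : E)) x : ℝ) = 0 := Submodule.starProjection_inner_eq_zero (K := F ⊓ G) (y' : E) x hxK
        rw [inner_sub_left] at h1
        have h2 : (inner ℝ ((Submodule.orthogonalProjectionOnto (F ⊓ G) (y' : E) : E)) x : ℝ) = ‖x‖ ^ 2 := by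
          rw [hPy, real_inner_self_eq_norm_sq]
        have h3 : (inner ℝ x (y' : E) : ℝ) = inner ℝ (y' : E) x := real_inner_comm _ _
        linarith
      have hb := hPnorm (y' : E) hyK'
      rw [hPy] at hb
      have hle : projAngle x (y' : E) ≤ δ := by
        refine projAngle_le_of x (y' : E) hδ0 (by linarith [Real.pi_pos])
          (mul_pos hxn hyn) ?_
        rw [hinner, abs_of_nonneg (by positivity : (0:ℝ) ≤ ‖x‖ ^ 2)]
        nlinarith
      exact le_trans (ciInf_le (hbbK' _) ⟨(y' : E), hyK', hy0⟩) hle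
    · -- second component
      refine Real.iSup_le ?_ hδ0
      rintro ⟨y, hyK', hy0⟩
      exact hB y hyK' hy0
  · -- δ ≥ π/2 : everything is trivially bounded
    push_neg at hδπ
    refine max_le (Real.iSup_le ?_ hδ0) (Real.iSup_le ?_ hδ0)
    · rintro ⟨x, hxK, hx0⟩
      exact le_trans (le_trans (ciInf_le (hbbK' _) ⟨y₀, hy₀K, hy₀0⟩)
        (projAngle_le_pi_div_two _ _)) hδπ
    · rintro ⟨y, hyK', hy0⟩
      exact le_trans (le_trans (ciInf_le (hbbK _) ⟨x₀, hx₀K, hx₀0⟩)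
        (projAngle_le_pi_div_two _ _)) hδπ
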